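/- Let (T, N, S) be an ON-structure on a bimodule (V; L, R) over a pre-Lie algebra (g, ·). Then S is a Nijenhuis operator on the pre-Lie algebra (V, ·^T), i.e., S(u) ·^T S(v) = S(S(u) ·^T v + u ·^T S(v) − S(u ·^T v)) for all u,v ∈ V. -/
import Mathlib


def PreLieFn {g : Type*} [AddCommGroup g] (m : g → g → g) : Prop :=
  ∀ x y z : g, m (m x y) z - m x (m y z) = m (m y x) z - m y (m x z)

def BimodFn {g V : Type*} [AddCommGroup g] [AddCommGroup V]
    (m : g → g → g) (L R : g → V → V) : Prop :=
  (∀ (x y : g) (u : V), L x (L y u) - L (m x y) u = L y (L x u) - L (m y x) u) ∧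
  (∀ (x y : g) (u : V), L x (R y u) - R y (L x u) = R (m x y) u - R y (R x u))

def NijFn {g : Type*} [AddCommGroup g] (m : g → g → g) (N : g → g) : Prop :=
  ∀ x y : g, m (N x) (N y) = N (m (N x) y + m x (N y) - N (m x y))

def IsOOp {K g V : Type*} [Field K] [AddCommGroup g] [Module K g]
    [AddCommGroup V] [Module K V]
    (m : g →ₗ[K] g →ₗ[K] g) (L R : g →ₗ[K] Module.End K V) (T : V →ₗ[K] g) : Prop :=
  ∀ u v : V, m (T u) (T v) = T (L (T u) v + R (T v) u)

/-- for an ON-structure (T,N,S), S is a Nijenhuis operator on the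
pre-Lie algebra (V, ·^T). -/
theorem on_structure_S_nijenhuis {K g V : Type*} [Field K]
    [AddCommGroup g] [Module K g] [AddCommGroup V] [Module K V]
    (m : g →ₗ[K] g →ₗ[K] g) (hm : PreLieFn (fun x y => m x y))
    (L R : g →ₗ[K] Module.End K V)
    (hb : BimodFn (fun x y => m x y) (fun x u => L x u) (fun x u => R x u))
    (T : V →ₗ[K] g) (hT : IsOOp m L R T)
    (N : Module.End K g) (S : Module.End K V)
    (hN : NijFn (fun x y => m x y) N)
    (hLS : ∀ (x : g) (v : V),
      L (N x) (S v) = S (L (N x) v) + L x (S (S v)) - S (L x (S v)))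
    (hRS : ∀ (x : g) (v : V),
      R (N x) (S v) = S (R (N x) v) + R x (S (S v)) - S (R x (S v)))
    (hNT : ∀ v : V, N (T v) = T (S v))
    (hmul : ∀ u v : V,
      L (N (T u)) v + R (N (T v)) u =
      (L (T (S u)) v + R (T v) (S u)) + (L (T u) (S v) + R (T (S v)) u) -
        S (L (T u) v + R (T v) u)) :
    NijFn (fun u v : V => L (T u) v + R (T v) u) S := by
  intro u v
  have h1 := hLS (T u) v
  have h2 := hmul u (S v)
  have h3 := congrArg S (hmul u v)
  rw [hNT u] at h1 h2 h3
  rw [hNT v] at h3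
  rw [hNT (S v)] at h2
  simp only [map_add, map_sub] at h2 h3 ⊢
  linear_combination (norm := module) h1 - h2 + h3
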